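/- arXiv:1802.03347 — 4 statements merged into one kernel-verified Lean document; each statement's English description precedes it below -/
import Mathlib

section
/- Let X, Y be real Hilbert spaces, A ∈ L(X;Y), and φ, ψ, η > 0 with δ, κ satisfying 0 ≤ δ ≤ κ < 1 and ψ(1−κ) ≥ η²φ⁻¹‖A‖². Then for all (x,y) ∈ X × Y, φ‖x‖² − 2η⟨Ax,y⟩ + ψ‖y‖² ≥ δφ‖x‖² + ((κ−δ)/(1−δ))ψ‖y‖². -/
open scoped RealInnerProductSpace

/-- Two-sided lower bound on the quadratic form of the preconditioning metric
(scalar case of Lemma 3.2). -/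
theorem block_metric_two_sided_bound {X Y : Type*}
    [NormedAddCommGroup X] [InnerProductSpace ℝ X]
    [NormedAddCommGroup Y] [InnerProductSpace ℝ Y]
    (A : X →L[ℝ] Y) (φ ψ η δ κ : ℝ) (hφ : 0 < φ) (hψ : 0 < ψ) (hη : 0 < η)
    (hδ0 : 0 ≤ δ) (hδκ : δ ≤ κ) (hκ1 : κ < 1)
    (hstep : ψ * (1 - κ) ≥ η ^ 2 * φ⁻¹ * ‖A‖ ^ 2) :
    ∀ (x : X) (y : Y),
      φ * ‖x‖ ^ 2 - 2 * η * ⟪A x, y⟫ + ψ * ‖y‖ ^ 2 ≥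
        δ * φ * ‖x‖ ^ 2 + ((κ - δ) / (1 - δ)) * ψ * ‖y‖ ^ 2 := by
  intro x y
  have hs : η ^ 2 * ‖A‖ ^ 2 ≤ ψ * (1 - κ) * φ := by
    have := mul_le_mul_of_nonneg_right hstep hφ.le
    calc η ^ 2 * ‖A‖ ^ 2 = η ^ 2 * φ⁻¹ * ‖A‖ ^ 2 * φ := by
          field_simp
      _ ≤ ψ * (1 - κ) * φ := this
  have hA : ⟪A x, y⟫ ≤ ‖A‖ * ‖x‖ * ‖y‖ := by
    calc ⟪A x, y⟫ ≤ ‖A x‖ * ‖y‖ := real_inner_le_norm _ _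
      _ ≤ ‖A‖ * ‖x‖ * ‖y‖ := by
          have := A.le_opNorm x
          exact mul_le_mul_of_nonneg_right this (norm_nonneg y)
  have hδ1 : 0 < 1 - δ := by linarith
  have hdiv : (κ - δ) / (1 - δ) * ψ = ψ - (1 - κ) / (1 - δ) * ψ := by
    field_simp; ring
  rw [hdiv]
  have key : (1 - δ) * φ * ‖x‖ ^ 2 - 2 * η * ⟪A x, y⟫ +
      (1 - κ) / (1 - δ) * ψ * ‖y‖ ^ 2 ≥ 0 := by
    have h1 : (1 - κ) / (1 - δ) * ψ ≥ η ^ 2 * ‖A‖ ^ 2 / ((1 - δ) * φ) := by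
      have hpos : 0 < (1 - δ) * φ := by positivity
      have heq : (1 - κ) / (1 - δ) * ψ * ((1 - δ) * φ) = ψ * (1 - κ) * φ := by
        field_simp
      rw [ge_iff_le, div_le_iff₀ hpos, heq]; exact hs
    have h2 : (1 - δ) * φ * ‖x‖ ^ 2 - 2 * η * (‖A‖ * ‖x‖ * ‖y‖) +
        η ^ 2 * ‖A‖ ^ 2 / ((1 - δ) * φ) * ‖y‖ ^ 2 ≥ 0 := by
      have := sq_nonneg ((1 - δ) * φ * ‖x‖ - η * ‖A‖ * ‖y‖)
      rw [ge_iff_le, ← sub_nonneg]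
      have hpos : 0 < (1 - δ) * φ := by positivity
      field_simp
      nlinarith
    nlinarith [mul_le_mul_of_nonneg_left hA (by positivity : (0:ℝ) ≤ 2 * η),
      mul_le_mul_of_nonneg_right h1 (sq_nonneg ‖y‖)]
  nlinarith
end

section
/- Let (τᵢ) be a sequence of positive reals with τ_{i+1} = τᵢ/√(1 + 2γτᵢ) for a fixed γ > 0. Then τ_N = O(1/N); more precisely, there exists c > 0 such that τ_N ≤ c/N for all N ≥ 1, and consequently φ_N := c₀/τ_N² (for any c₀ > 0) satisfies φ_N ≥ c′N² for some c′ > 0. -/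
/-- Step-length decay rate: `τ_{i+1} = τᵢ/√(1+2γτᵢ)` implies `τ_N = O(1/N)` and hence
`φ_N := c₀/τ_N²` grows quadratically. -/
theorem step_length_decay (τ : ℕ → ℝ) (γ : ℝ) (hγ : 0 < γ)
    (hpos : ∀ i, 0 < τ i)
    (hrec : ∀ i, τ (i + 1) = τ i / Real.sqrt (1 + 2 * γ * τ i)) :
    ∃ c > 0, (∀ N : ℕ, 1 ≤ N → τ N ≤ c / N) ∧
      ∀ c₀ > 0, ∃ c' > 0, ∀ N : ℕ, 1 ≤ N → c' * (N : ℝ) ^ 2 ≤ c₀ / (τ N) ^ 2 := by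
  set α := min (1 / τ 1) (2 * γ / 3) with hαdef
  have hα0 : 0 < α :=
    lt_min (one_div_pos.mpr (hpos 1)) (by positivity)
  have key : ∀ N : ℕ, 1 ≤ N → α * N ≤ 1 / τ N := by
    intro N hN
    induction N with
    | zero => omega
    | succ n ih =>
      rcases Nat.lt_or_ge n 1 with hn | hn
      · interval_cases n
        calc α * ((0 + 1 : ℕ) : ℝ) = α := by norm_num
          _ ≤ 1 / τ (0 + 1) := min_le_left _ _
      · have ihn := ih hn
        have hτn := hpos n
        have hτn1 := hpos (n + 1)
        have harg : (0:ℝ) < 1 + 2 * γ * τ n := by positivity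
        have hsq : (1 / τ (n+1))^2 = (1 / τ n)^2 + 2 * γ * (1 / τ n) := by
          rw [hrec n, div_pow, div_pow, Real.sq_sqrt harg.le]
          field_simp
        have hn1 : (1:ℝ) ≤ (n:ℝ) := by exact_mod_cast hn
        have hα2 : α ≤ 2 * γ / 3 := min_le_right _ _
        have hsqle : (α * ((n:ℝ)+1))^2 ≤ (1 / τ (n+1))^2 := by
          rw [hsq]
          nlinarith [mul_nonneg (sub_nonneg.mpr ihn)
              (show (0:ℝ) ≤ 1 / τ n + α * n by positivity),
            mul_le_mul_of_nonneg_left ihn (by linarith : (0:ℝ) ≤ 2 * γ),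
            mul_le_mul_of_nonneg_left
              (mul_le_mul hα2 (show (2*(n:ℝ)+1) ≤ 3*n by linarith)
                (by linarith) (by positivity)) hα0.le]
        have hle : α * ((n:ℝ)+1) ≤ 1 / τ (n+1) :=
          le_of_pow_le_pow_left₀ two_ne_zero (by positivity) hsqle
        push_cast
        linarith
  refine ⟨1 / α, by positivity, ?_, ?_⟩
  · intro N hN
    have hk := key N hN
    have hτ := hpos N
    have hN0 : (0:ℝ) < N := by exact_mod_cast hN
    rw [div_div, le_div_iff₀ (by positivity)]
    rw [le_div_iff₀ hτ] at hk
    nlinarith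
  · intro c₀ hc₀
    refine ⟨c₀ * α^2, by positivity, fun N hN => ?_⟩
    have hk := key N hN
    have hτ := hpos N
    have hN0 : (0:ℝ) ≤ N := by positivity
    rw [le_div_iff₀ (by positivity : (0:ℝ) < (τ N)^2)]
    have h2 : α * N * τ N ≤ 1 := by
      rw [le_div_iff₀ hτ] at hk; linarith
    have h3 : (α * ↑N * τ N)^2 ≤ 1 := by
      nlinarith [mul_nonneg (mul_nonneg hα0.le hN0) hτ.le]
    nlinarith [mul_le_mul_of_nonneg_left h3 hc₀.le]
end

section
/- For all real φ, φ′: ‖D‖² := 2r̂²(1 − cos(φ̂ − φ)) + r²(φ − φ̂)² − 2r·r̂·(φ̂ − φ)·sin(φ̂ − φ) ≤ (r̂ − r)²(φ̂ − φ)² + 2r·r̂·(φ̂ − φ)⁴ for all real r, r̂ ≥ 0 and angles φ, φ̂. -/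
lemma aux_t_sin_t (t : ℝ) : t ^ 2 - t ^ 4 ≤ t * Real.sin t := by
  have key : ∀ s : ℝ, 0 ≤ s → s ^ 2 - s ^ 4 ≤ s * Real.sin s := by
    intro s hs
    rcases eq_or_lt_of_le hs with h0 | h0
    · simp [← h0]
    rcases le_or_gt s 1 with h1 | h1
    · have := Real.sin_gt_sub_cube h0
      nlinarith [pow_nonneg hs 4]
    rcases le_or_gt s Real.pi with h2 | h2
    · have hsin : 0 ≤ Real.sin s := Real.sin_nonneg_of_nonneg_of_le_pi hs h2
      have ha : 0 ≤ s * Real.sin s := mul_nonneg h0.le hsin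
      have hb : 0 ≤ s ^ 2 * (s ^ 2 - 1) := mul_nonneg (sq_nonneg s) (by nlinarith)
      nlinarith
    · have h3 : (3 : ℝ) ≤ s := le_trans (by linarith [Real.pi_gt_three]) h2.le
      have hsin : -1 ≤ Real.sin s := Real.neg_one_le_sin s
      nlinarith [mul_nonneg h0.le (by linarith : (0:ℝ) ≤ Real.sin s + 1),
        pow_le_pow_left₀ (by norm_num : (0:ℝ) ≤ 3) h3 4,
        pow_le_pow_left₀ (by norm_num : (0:ℝ) ≤ 3) h3 2,
        mul_nonneg (mul_nonneg hs hs) (by linarith : (0:ℝ) ≤ s - 3)]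
  rcases le_or_gt 0 t with ht | ht
  · exact key t ht
  · have h := key (-t) (by linarith)
    have h4 : (-t) ^ 2 - (-t) ^ 4 = t ^ 2 - t ^ 4 := by ring
    have h5 : (-t) * Real.sin (-t) = t * Real.sin t := by rw [Real.sin_neg]; ring
    linarith [h4 ▸ h5 ▸ h]

/-- Taylor-remainder bound from the complex phase-amplitude reconstruction appendix. -/
theorem complex_reconstruction_remainder_bound (r rh φ φh : ℝ) (hr : 0 ≤ r) (hrh : 0 ≤ rh) :
    2 * rh ^ 2 * (1 - Real.cos (φh - φ)) + r ^ 2 * (φ - φh) ^ 2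
        - 2 * r * rh * (φh - φ) * Real.sin (φh - φ)
      ≤ (rh - r) ^ 2 * (φh - φ) ^ 2 + 2 * r * rh * (φh - φ) ^ 4 := by
  set t := φh - φ with ht
  have hcos : 1 - Real.cos t ≤ t ^ 2 / 2 := by
    have := Real.one_sub_sq_div_two_le_cos (x := t); linarith
  have hsin := aux_t_sin_t t
  have hφ : (φ - φh) ^ 2 = t ^ 2 := by rw [ht]; ring
  rw [hφ]
  nlinarith [mul_nonneg hr hrh, sq_nonneg rh, mul_nonneg (mul_nonneg hr hrh) (sq_nonneg t)]
end

section
/- Let α, β, γ_x, ξ, L > 0 with 0 < ξ ≤ γ_x, and let X, Y be real Hilbert spaces. Suppose K : X → Y is Fréchet differentiable with L-Lipschitz derivative on a convex neighborhood 𝒳 of x̂, ŷ ∈ Y, and ‖x − x̂‖²_{Γ} + ⟨(∇K(x) − ∇K(x̂))(x − x̂), ŷ⟩ ≥ γ_x‖x − x̂‖² for all x ∈ 𝒳, where Γ ∈ L(X;X) is self-adjoint positive semidefinite. Then for all x, x′ ∈ 𝒳: ⟨[∇K(x′) − ∇K(x̂)]*ŷ, x − x̂⟩ + ‖x − x̂‖²_Γ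 ≥ (2(γ_x − ξ)/L)·‖K(x̂) − K(x) − ∇K(x)(x̂ − x)‖ − (L²‖ŷ‖²/(4ξ))·‖x − x′‖². -/
open scoped RealInnerProductSpace

/-- Taylor remainder bound: on a convex set where the derivative is `L`-Lipschitz,
`‖K b - K a - K' a (b - a)‖ ≤ L / 2 * ‖b - a‖ ^ 2`. -/
lemma taylor_remainder_bound {X Y : Type*}
    [NormedAddCommGroup X] [InnerProductSpace ℝ X]
    [NormedAddCommGroup Y] [InnerProductSpace ℝ Y]
    (K : X → Y) (K' : X → X →L[ℝ] Y) (𝒳 : Set X) (hconv : Convex ℝ 𝒳)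
    (L : ℝ) (hL : 0 < L)
    (hderiv : ∀ x ∈ 𝒳, HasFDerivAt K (K' x) x)
    (hlip : ∀ x ∈ 𝒳, ∀ x' ∈ 𝒳, ‖K' x - K' x'‖ ≤ L * ‖x - x'‖)
    {a b : X} (ha : a ∈ 𝒳) (hb : b ∈ 𝒳) :
    ‖K b - K a - K' a (b - a)‖ ≤ L / 2 * ‖b - a‖ ^ 2 := by
  set v : X := b - a with hv
  have hmem : ∀ t : ℝ, t ∈ Set.Icc (0 : ℝ) 1 → a + t • v ∈ 𝒳 := by
    intro t ht
    have : a + t • v = (1 - t) • a + t • b := by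
      simp [hv, smul_sub, sub_smul]; abel
    rw [this]
    exact hconv ha hb (by linarith [ht.2]) ht.1 (by ring)
  set g : ℝ → Y := fun t => K (a + t • v) - K a - t • (K' a) v with hg
  set g' : ℝ → Y := fun t => (K' (a + t • v)) v - (K' a) v with hg'
  have hgderiv : ∀ t ∈ Set.Icc (0 : ℝ) 1, HasDerivAt g (g' t) t := by
    intro t ht
    have hcurve : HasDerivAt (fun t : ℝ => a + t • v) v t := by
      simpa using ((hasDerivAt_id t).smul_const v).const_add a
    have h1 : HasDerivAt (fun t : ℝ => K (a + t • v)) ((K' (a + t • v)) v) t := by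
      exact (hderiv _ (hmem t ht)).comp_hasDerivAt t hcurve
    have h2 : HasDerivAt (fun t : ℝ => K a + t • (K' a) v) ((K' a) v) t := by
      simpa using ((hasDerivAt_id t).smul_const ((K' a) v)).const_add (K a)
    have := h1.sub h2
    simpa [hg, hg', sub_sub, Pi.sub_def] using this
  set B : ℝ → ℝ := fun t => L * ‖v‖ ^ 2 / 2 * t ^ 2 with hB
  set B' : ℝ → ℝ := fun t => L * ‖v‖ ^ 2 * t with hB'
  have hBderiv : ∀ t : ℝ, HasDerivAt B (B' t) t := by
    intro t
    have := (hasDerivAt_pow 2 t).const_mul (L * ‖v‖ ^ 2 / 2)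
    simpa [hB, hB'] using this.congr_deriv (by ring)
  have hbound : ∀ t ∈ Set.Ico (0 : ℝ) 1, ‖g' t‖ ≤ B' t := by
    intro t ht
    have htIcc : t ∈ Set.Icc (0 : ℝ) 1 := ⟨ht.1, ht.2.le⟩
    have h1 : ‖g' t‖ ≤ ‖K' (a + t • v) - K' a‖ * ‖v‖ := by
      simpa [hg'] using (K' (a + t • v) - K' a).le_opNorm v
    have h2 : ‖K' (a + t • v) - K' a‖ ≤ L * ‖(a + t • v) - a‖ :=
      hlip _ (hmem t htIcc) a ha
    have h3 : ‖(a + t • v) - a‖ = t * ‖v‖ := by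
      simp [norm_smul, abs_of_nonneg ht.1]
    have hvnn : (0 : ℝ) ≤ ‖v‖ := norm_nonneg v
    calc ‖g' t‖ ≤ ‖K' (a + t • v) - K' a‖ * ‖v‖ := h1
      _ ≤ L * (t * ‖v‖) * ‖v‖ := by
          rw [h3] at h2; exact mul_le_mul_of_nonneg_right h2 hvnn
      _ = B' t := by rw [hB']; ring
  have hcont : ContinuousOn g (Set.Icc (0 : ℝ) 1) := fun t ht =>
    (hgderiv t ht).continuousAt.continuousWithinAt
  have key := image_norm_le_of_norm_deriv_right_le_deriv_boundary hcont
    (fun t ht => (hgderiv t ⟨ht.1, ht.2.le⟩).hasDerivWithinAt)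
    (by simp [hg, hB]) hBderiv hbound
  have h1 := key (Set.right_mem_Icc.2 zero_le_one)
  have hg1 : g 1 = K b - K a - (K' a) v := by simp [hg, hv]
  have hB1 : B 1 = L / 2 * ‖v‖ ^ 2 := by rw [hB]; ring
  rw [hg1, hB1] at h1
  simpa [hv] using h1

/-- Proposition 3.5: the growth condition on `K` at `xhat` verifies the three-point
condition with exponent `p = 1`. -/
theorem three_point_condition_from_growth {X Y : Type*}
    [NormedAddCommGroup X] [InnerProductSpace ℝ X]
    [NormedAddCommGroup Y] [InnerProductSpace ℝ Y]
    (K : X → Y) (K' : X → X →L[ℝ] Y) (𝒳 : Set X) (hconv : Convex ℝ 𝒳)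
    (xhat : X) (hxhat : xhat ∈ 𝒳) (yhat : Y) (Γ : X →L[ℝ] X)
    (L γx ξ : ℝ) (hL : 0 < L) (hγx : 0 < γx) (hξ0 : 0 < ξ) (hξγ : ξ ≤ γx)
    (hΓsym : ∀ u v : X, ⟪Γ u, v⟫ = ⟪u, Γ v⟫)
    (hΓpos : ∀ u : X, 0 ≤ ⟪Γ u, u⟫)
    (hderiv : ∀ x ∈ 𝒳, HasFDerivAt K (K' x) x)
    (hlip : ∀ x ∈ 𝒳, ∀ x' ∈ 𝒳, ‖K' x - K' x'‖ ≤ L * ‖x - x'‖)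
    (hgrowth : ∀ x ∈ 𝒳,
      ⟪Γ (x - xhat), x - xhat⟫ + ⟪(K' x - K' xhat) (x - xhat), yhat⟫ ≥ γx * ‖x - xhat‖ ^ 2) :
    ∀ x ∈ 𝒳, ∀ x' ∈ 𝒳,
      ⟪(K' x' - K' xhat) (x - xhat), yhat⟫ + ⟪Γ (x - xhat), x - xhat⟫ ≥
        (2 * (γx - ξ) / L) * ‖K xhat - K x - K' x (xhat - x)‖
          - (L ^ 2 * ‖yhat‖ ^ 2 / (4 * ξ)) * ‖x - x'‖ ^ 2 := by
  intro x hx x' hx'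
  set d : X := x - xhat with hd
  -- split the inner product
  have hsplit : ⟪(K' x' - K' xhat) d, yhat⟫ =
      ⟪(K' x' - K' x) d, yhat⟫ + ⟪(K' x - K' xhat) d, yhat⟫ := by
    have : (K' x' - K' xhat) d = (K' x' - K' x) d + (K' x - K' xhat) d := by
      simp only [ContinuousLinearMap.sub_apply]; abel
    rw [this, inner_add_left]
  -- Cauchy + AM-GM bound
  have hcauchy : ⟪(K' x' - K' x) d, yhat⟫ ≥
      -(ξ * ‖d‖ ^ 2 + L ^ 2 * ‖yhat‖ ^ 2 / (4 * ξ) * ‖x - x'‖ ^ 2) := by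
    have h1 : |⟪(K' x' - K' x) d, yhat⟫| ≤ ‖(K' x' - K' x) d‖ * ‖yhat‖ :=
      abs_real_inner_le_norm _ _
    have h2 : ‖(K' x' - K' x) d‖ ≤ ‖K' x' - K' x‖ * ‖d‖ :=
      (K' x' - K' x).le_opNorm d
    have h3 : ‖K' x' - K' x‖ ≤ L * ‖x' - x‖ := hlip x' hx' x hx
    have h4 : ‖x' - x‖ = ‖x - x'‖ := norm_sub_rev _ _
    have hdnn : (0 : ℝ) ≤ ‖d‖ := norm_nonneg _
    have hynn : (0 : ℝ) ≤ ‖yhat‖ := norm_nonneg _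
    have hxnn : (0 : ℝ) ≤ ‖x - x'‖ := norm_nonneg _
    have h5 : ‖(K' x' - K' x) d‖ * ‖yhat‖ ≤ L * ‖x - x'‖ * ‖d‖ * ‖yhat‖ := by
      have : ‖(K' x' - K' x) d‖ ≤ L * ‖x - x'‖ * ‖d‖ := by
        calc ‖(K' x' - K' x) d‖ ≤ ‖K' x' - K' x‖ * ‖d‖ := h2
          _ ≤ L * ‖x - x'‖ * ‖d‖ := by
              rw [← h4]; exact mul_le_mul_of_nonneg_right h3 hdnn
      exact mul_le_mul_of_nonneg_right this hynn
    have hamgm : L * ‖x - x'‖ * ‖d‖ * ‖yhat‖ ≤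
        ξ * ‖d‖ ^ 2 + L ^ 2 * ‖yhat‖ ^ 2 / (4 * ξ) * ‖x - x'‖ ^ 2 := by
      have h4ξ : (0:ℝ) < 4 * ξ := by linarith
      have key : L * ‖x - x'‖ * ‖d‖ * ‖yhat‖ * (4 * ξ) ≤
          ξ * ‖d‖ ^ 2 * (4 * ξ) + L ^ 2 * ‖yhat‖ ^ 2 * ‖x - x'‖ ^ 2 := by
        nlinarith [sq_nonneg (2 * ξ * ‖d‖ - L * ‖yhat‖ * ‖x - x'‖)]
      calc L * ‖x - x'‖ * ‖d‖ * ‖yhat‖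
          = L * ‖x - x'‖ * ‖d‖ * ‖yhat‖ * (4 * ξ) / (4 * ξ) := by field_simp
        _ ≤ (ξ * ‖d‖ ^ 2 * (4 * ξ) + L ^ 2 * ‖yhat‖ ^ 2 * ‖x - x'‖ ^ 2) / (4 * ξ) := by
            gcongr
        _ = ξ * ‖d‖ ^ 2 + L ^ 2 * ‖yhat‖ ^ 2 / (4 * ξ) * ‖x - x'‖ ^ 2 := by
            field_simp
    have habs := neg_abs_le (⟪(K' x' - K' x) d, yhat⟫)
    nlinarith [habs, h1, h5, hamgm]
  -- growth
  have hgr := hgrowth x hx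
  -- Taylor bound
  have htaylor : ‖K xhat - K x - K' x (xhat - x)‖ ≤ L / 2 * ‖d‖ ^ 2 := by
    have := taylor_remainder_bound K K' 𝒳 hconv L hL hderiv hlip hx hxhat
    rw [hd, ← norm_neg d, neg_sub]
    exact this
  have hcoef : 0 ≤ 2 * (γx - ξ) / L := div_nonneg (by linarith) hL.le
  have hkey : (2 * (γx - ξ) / L) * ‖K xhat - K x - K' x (xhat - x)‖ ≤
      (γx - ξ) * ‖d‖ ^ 2 := by
    calc (2 * (γx - ξ) / L) * ‖K xhat - K x - K' x (xhat - x)‖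
        ≤ (2 * (γx - ξ) / L) * (L / 2 * ‖d‖ ^ 2) := by
          exact mul_le_mul_of_nonneg_left htaylor hcoef
      _ = (γx - ξ) * ‖d‖ ^ 2 := by field_simp
  rw [hsplit]
  linarith [hcauchy, hgr, hkey]
end
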